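/- arXiv:2508.10756 — 2 statements merged into one kernel-verified Lean document; each statement's English description precedes it below -/
import Mathlib

section
/- Let n ≥ 1 and let H be any subgroup of D_{2n} isomorphic to a dihedral group (equivalently, any subgroup of D_{2n} containing a reflection ba^i). Then (D_{2n}, H) is a strong Gelfand pair. In particular, for every divisor m of n, the dihedral subgroup D_{2m} ≤ D_{2n} is a strong Gelfand subgroup. -/
open CategoryTheory

/-- `(G, H)` is a strong Gelfand pair: the restriction to `H` of every irreducible
complex representation of `G` is multiplicity-free, i.e. every irreducible
complex representation of `H` occurs in it with multiplicity at most one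
(equivalently, by Frobenius reciprocity, every irreducible character of `H`
induces to a multiplicity-free character of `G`). -/
def IsStrongGelfandPair (G : Type) [Group G] (H : Subgroup G) : Prop :=
  ∀ (V : FDRep ℂ G) (W : FDRep ℂ H), Simple V → Simple W →
    Module.finrank ℂ (W ⟶ (Action.res (FGModuleCat ℂ) H.subtype).obj V) ≤ 1


section Bridge

open Module

variable {k : Type} [Field k] {G : Type} [Group G]

/-- A nonzero invariant submodule of a simple `FDRep` is everything. -/
lemma FDRep.subrep_eq_top (V : FDRep k G) [Simple V] (U : Submodule k V)
    (hU : ∀ (g : G), ∀ x ∈ U, V.ρ g x ∈ U) (hne : U ≠ ⊥) : U = ⊤ := by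
  classical
  let ρU : Representation k G U :=
  { toFun := fun g => (V.ρ g).restrict (fun x hx => hU g x hx)
    map_one' := by
      ext x
      simp [LinearMap.restrict_apply]
    map_mul' := fun g h => by
      ext x
      simp [LinearMap.restrict_apply] }
  let VU : FDRep k G := FDRep.of ρU
  let ι : VU ⟶ V := { hom := FGModuleCat.ofHom U.subtype, comm := fun g => rfl }
  haveI : Mono ι := by
    apply Functor.mono_of_mono_map (Action.forget (FGModuleCat k) (MonCat.of G))
    apply ConcreteCategory.mono_of_injective
    exact Subtype.val_injective
  obtain ⟨x, hxU, hx0⟩ := Submodule.ne_bot_iff U |>.mp hne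
  have hι : ι ≠ 0 := by
    intro h
    have h2 : ι.hom ⟨x, hxU⟩ = (0 : V) := by rw [h]; rfl
    exact hx0 h2
  haveI : IsIso ι := isIso_of_mono_of_nonzero hι
  refine Submodule.eq_top_iff'.mpr fun v => ?_
  have h3 : ι.hom ((inv ι).hom v) = v :=
    congrFun (congrArg (fun (q : V.V ⟶ V.V) => (q : V → V))
      (congrArg Action.Hom.hom (IsIso.inv_hom_id ι))) v
  have h4 : ι.hom ((inv ι).hom v) ∈ U := ((inv ι).hom v).2
  rwa [h3] at h4

lemma FDRep.nontrivial_of_simple (V : FDRep k G) [Simple V] : Nontrivial V := by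
  by_contra h
  rw [not_nontrivial_iff_subsingleton] at h
  apply id_nonzero V
  have hz : ∀ x : V, ((𝟙 V : V ⟶ V).hom.hom.hom : V →ₗ[k] V) x
      = ((0 : V ⟶ V).hom.hom.hom : V →ₗ[k] V) x := fun x => h.elim _ _
  ext : 1
  apply FGModuleCat.hom_ext
  exact LinearMap.ext hz

lemma FDRep.exists_smul_eq_of_commutes [IsAlgClosed k] (V : FDRep k G) [Simple V]
    (T : V →ₗ[k] V) (hT : ∀ (g : G) (x : V), T (V.ρ g x) = V.ρ g (T x)) :
    ∃ c : k, ∀ x : V, T x = c • x := by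
  haveI : Nontrivial V := nontrivial_of_simple V
  obtain ⟨c, hc⟩ := Module.End.exists_eigenvalue (T : Module.End k V)
  refine ⟨c, fun x => ?_⟩
  have h := FDRep.subrep_eq_top V (Module.End.eigenspace T c) ?_ hc
  · have hx : x ∈ Module.End.eigenspace T c := h ▸ Submodule.mem_top
    exact Module.End.mem_eigenspace_iff.mp hx
  · intro g y hy
    rw [Module.End.mem_eigenspace_iff] at hy ⊢
    rw [hT g y, hy, map_smul]

end Bridge

section Dihedral

open Module DihedralGroup

variable {n : ℕ} [NeZero n]

lemma rho_r_eq_pow (V : FDRep ℂ (DihedralGroup n)) (j : ZMod n) :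
    V.ρ (r j) = (V.ρ (r 1)) ^ j.val := by
  have h : ((j.val : ℕ) : ZMod n) = j := ZMod.natCast_rightInverse j
  conv_lhs => rw [← h, ← r_one_pow]
  rw [map_pow]

lemma finrank_eq_one_of_sr_scalar (V : FDRep ℂ (DihedralGroup n)) [Simple V]
    (i : ZMod n) (c : ℂ) (hc : ∀ x : V, V.ρ (sr i) x = c • x) :
    Module.finrank ℂ V = 1 := by
  haveI : Nontrivial V := FDRep.nontrivial_of_simple V
  set A := V.ρ (r 1) with hA
  have hr : ∀ (j : ZMod n) (x : V), V.ρ (r j) x = (A ^ j.val) x := fun j x => by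
    rw [rho_r_eq_pow]
  have hsr : ∀ (j : ZMod n) (x : V), V.ρ (sr j) x = c • (A ^ (j - i).val) x := fun j x => by
    have e : sr i * r (j - i) = sr j := by rw [sr_mul_r]; ring_nf
    rw [← e, map_mul]
    show V.ρ (sr i) (V.ρ (r (j - i)) x) = _
    rw [hr, hc]
  have hcomm : ∀ (m : ℕ) (x : V), A ((A ^ m) x) = (A ^ m) (A x) := fun m x => by
    have e : A * A ^ m = A ^ m * A := ((Commute.refl A).pow_right m).eq
    calc A ((A ^ m) x) = (A * A ^ m) x := rfl
      _ = (A ^ m * A) x := by rw [e]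
      _ = (A ^ m) (A x) := rfl
  have hAcomm : ∀ (g : DihedralGroup n) (x : V), A (V.ρ g x) = V.ρ g (A x) := by
    intro g x
    match g with
    | DihedralGroup.r j => rw [hr j, hr j, hcomm]
    | DihedralGroup.sr j => rw [hsr j, hsr j, map_smul, hcomm]
  obtain ⟨a, ha⟩ := FDRep.exists_smul_eq_of_commutes V A hAcomm
  have hApow : ∀ (m : ℕ) (x : V), (A ^ m) x = a ^ m • x := by
    intro m
    induction m with
    | zero => intro x; simp
    | succ m ih =>
        intro x
        calc (A ^ (m + 1)) x = A ((A ^ m) x) := by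
              rw [pow_succ']; rfl
          _ = a • (A ^ m) x := ha _
          _ = a ^ (m + 1) • x := by rw [ih, smul_smul, pow_succ']
  have hscal : ∀ g : DihedralGroup n, ∃ s : ℂ, ∀ x : V, V.ρ g x = s • x := by
    intro g
    match g with
    | DihedralGroup.r j => exact ⟨a ^ j.val, fun x => by rw [hr, hApow]⟩
    | DihedralGroup.sr j =>
        exact ⟨c * a ^ (j - i).val, fun x => by rw [hsr, hApow, smul_smul]⟩
  obtain ⟨v, hv⟩ := exists_ne (0 : V)
  have htop := FDRep.subrep_eq_top V (Submodule.span ℂ {v}) ?_ ?_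
  · calc Module.finrank ℂ V = Module.finrank ℂ (⊤ : Submodule ℂ V) := (finrank_top ℂ V).symm
      _ = Module.finrank ℂ (Submodule.span ℂ {v}) := by rw [htop]
      _ = 1 := finrank_span_singleton hv
  · intro g x hx
    obtain ⟨s, hs⟩ := hscal g
    rw [hs]
    exact Submodule.smul_mem _ s hx
  · intro h
    rw [Submodule.span_singleton_eq_bot] at h
    exact hv h

lemma finrank_le_two_of_simple (V : FDRep ℂ (DihedralGroup n)) [Simple V] :
    Module.finrank ℂ V ≤ 2 := by
  classical
  haveI : Nontrivial V := FDRep.nontrivial_of_simple V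
  obtain ⟨ω, hω⟩ := Module.End.exists_eigenvalue (V.ρ (r 1) : Module.End ℂ V)
  obtain ⟨v, hv⟩ := hω.exists_hasEigenvector
  set A := V.ρ (r 1) with hA
  set B := V.ρ (sr 0) with hB
  have hApow : ∀ (m : ZMod n), V.ρ (r m) v = ω ^ m.val • v := fun m => by
    rw [rho_r_eq_pow]
    exact hv.pow_apply m.val
  set U := Submodule.span ℂ ({v, B v} : Set V) with hUdef
  have hvU : v ∈ U := Submodule.subset_span (Set.mem_insert _ _)
  have hBvU : B v ∈ U := Submodule.subset_span (Set.mem_insert_of_mem _ rfl)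
  have hgen : ∀ g : DihedralGroup n, V.ρ g v ∈ U ∧ V.ρ g (B v) ∈ U := by
    intro g
    match g with
    | DihedralGroup.r j =>
      constructor
      · rw [hApow]
        exact U.smul_mem _ hvU
      · have e1 : r j * sr 0 = sr 0 * r (-j) := by rw [r_mul_sr, sr_mul_r]; ring_nf
        have e2 : V.ρ (r j) (B v) = B (V.ρ (r (-j)) v) := by
          show (V.ρ (r j) * V.ρ (sr 0)) v = (V.ρ (sr 0) * V.ρ (r (-j))) v
          rw [← map_mul, ← map_mul, e1]
        rw [e2, hApow, map_smul]
        exact U.smul_mem _ hBvU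
    | DihedralGroup.sr j =>
      constructor
      · have e1 : sr j = sr 0 * r j := by rw [sr_mul_r, zero_add]
        have e2 : V.ρ (sr j) v = B (V.ρ (r j) v) := by rw [e1, map_mul]; rfl
        rw [e2, hApow, map_smul]
        exact U.smul_mem _ hBvU
      · have e1 : sr j * sr 0 = r (-j) := by rw [sr_mul_sr]; ring_nf
        have e2 : V.ρ (sr j) (B v) = V.ρ (r (-j)) v := by
          show (V.ρ (sr j) * V.ρ (sr 0)) v = _
          rw [← map_mul, e1]
        rw [e2, hApow]
        exact U.smul_mem _ hvU
  have hinv : ∀ g : DihedralGroup n, ∀ x ∈ U, V.ρ g x ∈ U := by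
    intro g x hx
    have hmap : Submodule.map (V.ρ g) U ≤ U := by
      rw [hUdef, Submodule.map_span, Set.image_pair]
      refine Submodule.span_le.mpr ?_
      rintro y (rfl | rfl)
      · exact (hgen g).1
      · exact (hgen g).2
    exact hmap ⟨x, hx, rfl⟩
  have htop := FDRep.subrep_eq_top V U hinv (by
    intro h
    exact hv.2 ((Submodule.mem_bot ℂ).mp (h ▸ hvU)))
  haveI : DecidableEq V := Classical.decEq _
  have hle : Module.finrank ℂ U ≤ 2 := by
    refine le_trans (finrank_span_le_card _) ?_
    rw [Set.toFinset_insert, Set.toFinset_singleton]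
    exact le_trans (Finset.card_insert_le _ _) (by simp)
  calc Module.finrank ℂ V = Module.finrank ℂ (⊤ : Submodule ℂ V) := (finrank_top ℂ V).symm
    _ = Module.finrank ℂ U := by rw [htop]
    _ ≤ 2 := hle

end Dihedral

open DihedralGroup

/-- For `n ≥ 1`, every subgroup of `D_{2n}` isomorphic to a dihedral group
(equivalently, every subgroup containing a reflection `b a^i`) is a strong
Gelfand subgroup of `D_{2n}`. -/
theorem isStrongGelfandPair_of_dihedral_subgroup (n : ℕ) (hn : 1 ≤ n)
    (H : Subgroup (DihedralGroup n)) (hH : ∃ i : ZMod n, DihedralGroup.sr i ∈ H) :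
    IsStrongGelfandPair (DihedralGroup n) H := by
  haveI : NeZero n := ⟨by omega⟩
  obtain ⟨i, hi⟩ := hH
  intro V W hV hW
  haveI := hV
  haveI := hW
  set R := (Action.res (FGModuleCat ℂ) H.subtype).obj V with hRdef
  by_contra hcon
  push_neg at hcon
  have h2 : 2 ≤ Module.finrank ℂ (W ⟶ R) := hcon
  haveI : Nontrivial W := FDRep.nontrivial_of_simple W
  haveI : Nontrivial V := FDRep.nontrivial_of_simple V
  let b := Module.finBasis ℂ (W ⟶ R)
  let i0 : Fin (Module.finrank ℂ (W ⟶ R)) := ⟨0, by omega⟩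
  let i1 : Fin (Module.finrank ℂ (W ⟶ R)) := ⟨1, by omega⟩
  have hne01 : i0 ≠ i1 := by simp [i0, i1, Fin.ext_iff]
  set f := b i0 with hfdef
  set g := b i1 with hgdef
  -- linear independence of f and g
  have hind : ∀ c d : ℂ, c • f + d • g = 0 → c = 0 ∧ d = 0 := by
    intro c d h
    have h0 := congrArg (fun z => (b.repr z) i0) h
    have h1 := congrArg (fun z => (b.repr z) i1) h
    simp only [hfdef, hgdef, map_add, map_smul, Module.Basis.repr_self, map_zero,
      Finsupp.add_apply, Finsupp.smul_apply, Finsupp.single_apply, if_pos rfl,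
      if_neg hne01, if_neg hne01.symm, Finsupp.coe_zero, Pi.zero_apply,
      smul_eq_mul, mul_one, mul_zero, add_zero, zero_add] at h0 h1
    simp only [if_true, mul_one] at h0 h1
    exact ⟨h0, h1⟩
  -- any nonzero morphism has injective underlying map
  have hcomm : ∀ (φ : W ⟶ R) (h : H) (x : W),
      (φ.hom.hom.hom : W →ₗ[ℂ] V) (W.ρ h x) = V.ρ (h : DihedralGroup n) ((φ.hom.hom.hom : W →ₗ[ℂ] V) x) :=
    fun φ h x =>
      congrFun (congrArg (fun (q : W.V ⟶ R.V) => (q : W → V)) (φ.comm h)) x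
  have hker : ∀ (φ : W ⟶ R), φ ≠ 0 → Function.Injective (φ.hom.hom.hom : W →ₗ[ℂ] V) := by
    intro φ hφ
    rw [← LinearMap.ker_eq_bot]
    by_contra hkb
    have htop := FDRep.subrep_eq_top W (LinearMap.ker (φ.hom.hom.hom : W →ₗ[ℂ] V)) ?_ hkb
    · apply hφ
      ext : 1
      apply FGModuleCat.hom_ext
      refine LinearMap.ext fun x => ?_
      have hx : x ∈ LinearMap.ker (φ.hom.hom.hom : W →ₗ[ℂ] V) := htop ▸ Submodule.mem_top
      simpa using hx
    · intro h x hx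
      rw [LinearMap.mem_ker] at hx ⊢
      exact (hcomm φ h x).trans
        (by rw [show (φ.hom.hom.hom : W →ₗ[ℂ] V) x = 0 from hx]; exact map_zero _)
  have hf0 : f ≠ 0 := fun h => one_ne_zero (hind 1 0 (by rw [h]; simp)).1
  have hg0 : g ≠ 0 := fun h => one_ne_zero (hind 0 1 (by rw [h]; simp)).2
  have hWV : Module.finrank ℂ W ≤ Module.finrank ℂ V :=
    LinearMap.finrank_le_finrank_of_injective (hker f hf0)
  have hV2 : Module.finrank ℂ V ≤ 2 := finrank_le_two_of_simple V
  have hW1 : 1 ≤ Module.finrank ℂ W := Module.finrank_pos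
  have hWcases : Module.finrank ℂ W = 1 ∨ Module.finrank ℂ W = 2 := by omega
  rcases hWcases with hWeq | hWeq
  · -- one-dimensional W
    obtain ⟨w0, hw0⟩ := exists_ne (0 : W)
    have hspan : Submodule.span ℂ ({w0} : Set W) = ⊤ := by
      apply Submodule.eq_top_of_finrank_eq
      rw [finrank_span_singleton hw0, hWeq]
    have hmem : ∀ x : W, ∃ t : ℂ, x = t • w0 := by
      intro x
      have hx : x ∈ Submodule.span ℂ ({w0} : Set W) := hspan ▸ Submodule.mem_top
      obtain ⟨t, ht⟩ := Submodule.mem_span_singleton.mp hx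
      exact ⟨t, ht.symm⟩
    set u : V := (f.hom.hom.hom : W →ₗ[ℂ] V) w0 with hu
    set u' : V := (g.hom.hom.hom : W →ₗ[ℂ] V) w0 with hu'
    have hindV : ∀ c d : ℂ, c • u + d • u' = 0 → c = 0 ∧ d = 0 := by
      intro c d h
      apply hind c d
      ext : 1
      apply FGModuleCat.hom_ext
      refine LinearMap.ext fun x => ?_
      obtain ⟨t, rfl⟩ := hmem x
      have e1 : ((c • f + d • g).hom.hom.hom : W →ₗ[ℂ] V)
          = c • (f.hom.hom.hom : W →ₗ[ℂ] V) + d • (g.hom.hom.hom : W →ₗ[ℂ] V) := rfl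
      have e2 : ((c • f + d • g).hom.hom.hom : W →ₗ[ℂ] V) (t • w0) = t • (c • u + d • u') := by
        rw [e1, map_smul]
        congr 1
      have hz : ((c • f + d • g).hom.hom.hom : W →ₗ[ℂ] V) (t • w0) = 0 := by
        rw [e2, h, smul_zero]; rfl
      exact hz.trans rfl
    have hu'0 : u' ≠ 0 := by
      intro h
      exact one_ne_zero (hindV 0 1 (by rw [h]; simp)).2
    have hli : LinearIndependent ℂ ![u, u'] := by
      rw [linearIndependent_fin2]
      refine ⟨hu'0, fun a ha => ?_⟩
      have := hindV 1 (-a) (by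
        simp only [Matrix.cons_val_zero, Matrix.cons_val_one, Matrix.head_cons] at ha ⊢
        rw [one_smul, neg_smul, ← ha]
        abel)
      exact one_ne_zero this.1
    have h2V : 2 ≤ Module.finrank ℂ V := by
      have := hli.fintype_card_le_finrank
      simpa using this
    have hVeq : Module.finrank ℂ V = 2 := by omega
    have hspanV : Submodule.span ℂ (Set.range ![u, u']) = ⊤ :=
      hli.span_eq_top_of_card_eq_finrank (by simpa using hVeq.symm)
    -- the reflection acts as a scalar
    obtain ⟨c, hc⟩ := hmem (W.ρ (⟨sr i, hi⟩ : H) w0)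
    have hcu : V.ρ (sr i) u = c • u := by
      have h1 := hcomm f ⟨sr i, hi⟩ w0
      rw [hc, map_smul] at h1
      exact h1.symm
    have hcu' : V.ρ (sr i) u' = c • u' := by
      have h1 := hcomm g ⟨sr i, hi⟩ w0
      rw [hc, map_smul] at h1
      exact h1.symm
    have hall : ∀ x : V, V.ρ (sr i) x = c • x := by
      intro x
      have hx : x ∈ Submodule.span ℂ (Set.range ![u, u']) := hspanV ▸ Submodule.mem_top
      have hle : Submodule.span ℂ (Set.range ![u, u'])
          ≤ Module.End.eigenspace (V.ρ (sr i) : Module.End ℂ V) c := by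
        refine Submodule.span_le.mpr ?_
        rw [Set.range_subset_iff]
        intro k
        fin_cases k
        · exact Module.End.mem_eigenspace_iff.mpr hcu
        · exact Module.End.mem_eigenspace_iff.mpr hcu'
      exact Module.End.mem_eigenspace_iff.mp (hle hx)
    have := finrank_eq_one_of_sr_scalar V i c hall
    omega
  · -- two-dimensional W
    have heq : Module.finrank ℂ W = Module.finrank ℂ V := by omega
    have hinj := hker f hf0
    have hbij : Function.Bijective (f.hom.hom.hom : W →ₗ[ℂ] V) :=
      ⟨hinj, (LinearMap.injective_iff_surjective_of_finrank_eq_finrank heq).mp hinj⟩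
    let e : W ≃ₗ[ℂ] V := LinearEquiv.ofBijective _ hbij
    have he : ∀ x : W, e x = (f.hom.hom.hom : W →ₗ[ℂ] V) x := fun x => rfl
    let finv : R ⟶ W :=
      { hom := FGModuleCat.ofHom e.symm.toLinearMap
        comm := by
          intro h
          apply FGModuleCat.hom_ext
          refine LinearMap.ext fun x => ?_
          show e.symm ((V.ρ ((H.subtype : _ →* DihedralGroup n) (show (↥H) from h))) x)
              = (W.ρ (show (↥H) from h)) (e.symm x)
          apply e.injective
          rw [e.apply_symm_apply]
          have k1 := hcomm f (show (↥H) from h) (e.symm x)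
          calc (V.ρ ((H.subtype : _ →* DihedralGroup n) (show (↥H) from h))) x
              = (V.ρ ((H.subtype : _ →* DihedralGroup n) (show (↥H) from h)))
                  (e (e.symm x)) := congrArg _ (e.apply_symm_apply x).symm
            _ = @id V ((f.hom.hom.hom : W →ₗ[ℂ] V) ((W.ρ (show (↥H) from h)) (e.symm x))) := k1.symm
            _ = e ((W.ρ (show (↥H) from h)) (e.symm x)) := rfl }
    have hiso : W ≅ R :=
      { hom := f
        inv := finv
        hom_inv_id := by
          ext : 1
          apply FGModuleCat.hom_ext
          exact LinearMap.ext fun x => e.symm_apply_apply x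
        inv_hom_id := by
          ext : 1
          apply FGModuleCat.hom_ext
          exact LinearMap.ext fun x => e.apply_symm_apply x }
    haveI : Simple R := Simple.of_iso hiso.symm
    have := finrank_hom_simple_simple_le_one ℂ W R
    omega
end

section
/- Let n ≥ 2 and let H be any subgroup of Dic_{4n} isomorphic to a dicyclic group (equivalently, any subgroup of Dic_{4n} containing an element of the form ba^i). Then (Dic_{4n}, H) is a strong Gelfand pair. In particular, every dicyclic subgroup Dic_{4k} ≤ Dic_{4n} is a strong Gelfand subgroup. -/
open CategoryTheory

open Module QuaternionGroup


section Helpers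
variable {k M : Type} [Field k] [Monoid M]

/-- The subrepresentation on an invariant submodule. -/
noncomputable def subRep (X : FDRep k M) (p : Submodule k X)
    (hp : ∀ (g : M), ∀ x ∈ p, X.ρ g x ∈ p) : FDRep k M :=
  FDRep.of (V := p)
    { toFun := fun g => (X.ρ g).restrict (fun x hx => hp g x hx)
      map_one' := by ext x; simp
      map_mul' := fun g h => by ext x; simp }

noncomputable def subRepHom (X : FDRep k M) (p : Submodule k X)
    (hp : ∀ (g : M), ∀ x ∈ p, X.ρ g x ∈ p) : subRep X p hp ⟶ X where
  hom := ConcreteCategory.ofHom (p.subtype : _ →ₗ[k] _)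
  comm := fun g => by ext x; rfl

theorem invariant_bot_or_top (X : FDRep k M) [Simple X] (p : Submodule k X)
    (hp : ∀ (g : M), ∀ x ∈ p, X.ρ g x ∈ p) : p = ⊥ ∨ p = ⊤ := by
  by_cases hbot : p = ⊥
  · exact Or.inl hbot
  right
  have hmono : Mono (subRepHom X p hp) := by
    apply (Action.forget (FGModuleCat k) M ⋙
      forget₂ (FGModuleCat k) (ModuleCat k)).mono_of_mono_map
    rw [ModuleCat.mono_iff_injective]
    exact fun a b h => Subtype.val_injective h
  have hne : subRepHom X p hp ≠ 0 := by
    obtain ⟨x, hx, hx0⟩ := Submodule.exists_mem_ne_zero_of_ne_bot hbot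
    intro h
    have : (subRepHom X p hp).hom.hom.hom ⟨x, hx⟩ = x := rfl
    rw [h] at this
    exact hx0 this.symm
  have : IsIso (subRepHom X p hp) := isIso_of_mono_of_nonzero hne
  have : IsIso ((Action.forget (FGModuleCat k) M ⋙
      forget₂ (FGModuleCat k) (ModuleCat k)).map (subRepHom X p hp)) := by
    infer_instance
  have hsurj := (ConcreteCategory.bijective_of_isIso ((Action.forget (FGModuleCat k) M ⋙
      forget₂ (FGModuleCat k) (ModuleCat k)).map (subRepHom X p hp))).2
  rw [Submodule.eq_top_iff']
  intro x
  obtain ⟨y, hy⟩ := hsurj x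
  exact hy ▸ y.2

theorem simple_nontrivial (X : FDRep k M) [Simple X] : Nontrivial X := by
  by_contra h
  rw [not_nontrivial_iff_subsingleton] at h
  apply id_nonzero X
  apply Action.Hom.ext
  apply FGModuleCat.hom_ext
  apply LinearMap.ext
  intro x
  exact @Subsingleton.elim _ h _ _

theorem hom_comm_apply' {W U : FDRep k M} (f : W ⟶ U) (g : M) (x : W) :
    (f.hom.hom.hom : W →ₗ[k] U) (W.ρ g x) = U.ρ g ((f.hom.hom.hom : W →ₗ[k] U) x) :=
  congrFun (congrArg (fun (m : W.V ⟶ U.V) => (m : W → U)) (f.comm g)) x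

theorem injective_of_nonzero {W U : FDRep k M} [Simple W] (f : W ⟶ U) (hf : f ≠ 0) :
    Function.Injective (f.hom.hom.hom : W →ₗ[k] U) := by
  have h := invariant_bot_or_top W (LinearMap.ker (f.hom.hom.hom : W →ₗ[k] U)) ?_
  · rcases h with h | h
    · rwa [← LinearMap.ker_eq_bot]
    · exfalso; apply hf
      apply Action.Hom.ext
      apply FGModuleCat.hom_ext
      apply LinearMap.ext
      intro x
      have : x ∈ LinearMap.ker (f.hom.hom.hom : W →ₗ[k] U) := h ▸ Submodule.mem_top
      simpa using this
  · intro g x hx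
    simp only [LinearMap.mem_ker] at hx ⊢
    exact (hom_comm_apply' f g x).trans
      (by rw [show (f.hom.hom.hom : W →ₗ[k] U) x = 0 from hx, map_zero])

end Helpers

theorem finrank_le_two {n : ℕ} (hn : n ≠ 0) (X : FDRep ℂ (QuaternionGroup n)) [Simple X] :
    finrank ℂ X ≤ 2 := by
  haveI : NeZero (2 * n) := ⟨by omega⟩
  haveI := simple_nontrivial X
  set T : Module.End ℂ X := X.ρ (a 1) with hT
  obtain ⟨μ, hμ⟩ := Module.End.exists_eigenvalue T
  obtain ⟨v, hv⟩ := hμ.exists_hasEigenvector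
  set w : X := X.ρ (xa 0) v with hw
  have hpow : ∀ i : ZMod (2 * n), X.ρ (a i) v = μ ^ i.val • v := by
    intro i
    have : (a i : QuaternionGroup n) = (a 1) ^ i.val := by
      rw [a_one_pow, ZMod.natCast_rightInverse i]
    rw [this, map_pow]
    exact hv.pow_apply i.val
  have hxv : ∀ i : ZMod (2 * n), X.ρ (xa i) v = μ ^ i.val • w := by
    intro i
    have : (xa i : QuaternionGroup n) = xa 0 * a i := by rw [xa_mul_a, zero_add]
    rw [this, map_mul, Module.End.mul_apply, hpow i, map_smul, hw]
  have haw : ∀ i : ZMod (2 * n), X.ρ (a i) w = μ ^ (-i).val • w := by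
    intro i
    have : (a i * xa 0 : QuaternionGroup n) = xa 0 * a (-i) := by
      rw [a_mul_xa, xa_mul_a, zero_sub, zero_add]
    calc X.ρ (a i) w = X.ρ (a i * xa 0) v := by rw [map_mul, Module.End.mul_apply, hw]
    _ = X.ρ (xa 0) (X.ρ (a (-i)) v) := by rw [this, map_mul, Module.End.mul_apply]
    _ = μ ^ (-i).val • w := by rw [hpow, map_smul, hw]
  have hxw : ∀ i : ZMod (2 * n), X.ρ (xa i) w = μ ^ ((n : ZMod (2*n)) - i).val • v := by
    intro i
    calc X.ρ (xa i) w = X.ρ (xa i * xa 0) v := by rw [map_mul, Module.End.mul_apply, hw]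
    _ = μ ^ ((n : ZMod (2*n)) - i).val • v := by rw [xa_mul_xa, add_zero, hpow]
  set S : Submodule ℂ X := Submodule.span ℂ {v, w} with hS
  have hvS : v ∈ S := Submodule.subset_span (Set.mem_insert _ _)
  have hwS : w ∈ S := Submodule.subset_span (Set.mem_insert_of_mem _ rfl)
  have hinv : ∀ (g : QuaternionGroup n), ∀ x ∈ S, X.ρ g x ∈ S := by
    intro g x hx
    induction hx using Submodule.span_induction with
    | mem y hy =>
      rcases hy with rfl | rfl
      · rcases g with i | i
        · rw [hpow]; exact S.smul_mem _ hvS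
        · rw [hxv]; exact S.smul_mem _ hwS
      · rcases g with i | i
        · rw [haw]; exact S.smul_mem _ hwS
        · rw [hxw]; exact S.smul_mem _ hvS
    | zero => rw [map_zero]; exact S.zero_mem
    | add y z _ _ hy hz => rw [map_add]; exact S.add_mem hy hz
    | smul c y _ hy => rw [map_smul]; exact S.smul_mem c hy
  have hStop : S = ⊤ := by
    rcases invariant_bot_or_top X S hinv with h | h
    · exact absurd (by simpa [h] using hvS) hv.2
    · exact h
  letI := Classical.decEq (CoeSort.coe X)
  haveI : Fintype ({v, w} : Set X) := Set.fintypeInsert v {w}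
  calc finrank ℂ X = finrank ℂ S := by rw [hStop, finrank_top]
  _ ≤ ({v, w} : Set X).toFinset.card := finrank_span_le_card _
  _ ≤ 2 := by
    simp only [Set.toFinset_insert, Set.toFinset_singleton]
    exact (Finset.card_insert_le _ _).trans (by simp)

/-- For `n ≥ 2`, every subgroup of `Dic_{4n}` isomorphic to a dicyclic group
(equivalently, every subgroup containing an element of the form `b a^i`) is a
strong Gelfand subgroup of `Dic_{4n}`. -/
theorem isStrongGelfandPair_of_dicyclic_subgroup (n : ℕ) (hn : 2 ≤ n)
    (H : Subgroup (QuaternionGroup n))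
    (hH : ∃ i : ZMod (2 * n), QuaternionGroup.xa i ∈ H) :
    IsStrongGelfandPair (QuaternionGroup n) H := by
  obtain ⟨i, hi⟩ := hH
  haveI : NeZero (2 * n) := ⟨by omega⟩
  intro V W hV hW
  haveI := hV; haveI := hW
  set U := (Action.res (FGModuleCat ℂ) H.subtype).obj V with hU
  haveI := simple_nontrivial V
  haveI := simple_nontrivial W
  have hd2 : finrank ℂ V ≤ 2 := finrank_le_two (by omega) V
  by_cases hiso : ∃ f : W ⟶ U, Function.Bijective (f.hom.hom.hom : W →ₗ[ℂ] V)
  · obtain ⟨f, hbij⟩ := hiso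
    haveI : Module.Finite ℂ W.V.obj := W.V.property
    haveI : Module.Finite ℂ U.V.obj := U.V.property
    let eqv := LinearEquiv.ofBijective (f.hom.hom.hom : W →ₗ[ℂ] V) hbij
    let iso : W ≅ U := Action.mkIso eqv.toFGModuleCatIso (fun h => f.comm h)
    haveI : Simple U := Simple.of_iso iso.symm
    rw [FDRep.finrank_hom_simple_simple W U]
    split_ifs <;> norm_num
  · rw [finrank_le_one_iff]
    by_cases h0 : ∀ f : W ⟶ U, f = 0
    · exact ⟨0, fun g => ⟨0, by rw [h0 g, smul_zero]⟩⟩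
    push_neg at h0
    obtain ⟨f, hf⟩ := h0
    refine ⟨f, fun g => ?_⟩
    by_cases hg : g = 0
    · exact ⟨0, by rw [hg, zero_smul]⟩
    have hfinj := injective_of_nonzero f hf
    have hginj := injective_of_nonzero g hg
    have hed : finrank ℂ W ≤ finrank ℂ U :=
      LinearMap.finrank_le_finrank_of_injective hfinj
    have hUV : finrank ℂ U = finrank ℂ V := rfl
    have hW1 : 0 < finrank ℂ W := finrank_pos
    have hne : finrank ℂ W ≠ finrank ℂ U := fun h =>
      hiso ⟨f, hfinj, (LinearMap.injective_iff_surjective_of_finrank_eq_finrank h).mp hfinj⟩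
    have he1 : finrank ℂ W = 1 := by omega
    have hd2' : finrank ℂ U = 2 := by omega
    obtain ⟨w₀, hw₀span⟩ := finrank_le_one_iff.mp he1.le
    obtain ⟨x₀, hx₀⟩ := exists_ne (0 : W)
    have hw₀ne : w₀ ≠ 0 := by
      rintro rfl
      obtain ⟨t, ht⟩ := hw₀span x₀
      rw [smul_zero] at ht
      exact hx₀ ht.symm
    set v₁ : V := (f.hom.hom.hom : W →ₗ[ℂ] V) w₀ with hv₁def
    set v₂ : V := (g.hom.hom.hom : W →ₗ[ℂ] V) w₀ with hv₂def
    have hv₁ : v₁ ≠ 0 := fun h => hw₀ne (hfinj (h.trans (map_zero _).symm))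
    have hv₂ : v₂ ≠ 0 := fun h => hw₀ne (hginj (h.trans (map_zero _).symm))
    by_cases hdep : ∃ c : ℂ, v₂ = c • v₁
    · obtain ⟨c, hc⟩ := hdep
      refine ⟨c, ?_⟩
      apply Action.Hom.ext
      apply FGModuleCat.hom_ext
      apply LinearMap.ext
      intro x
      obtain ⟨t, ht⟩ := hw₀span x
      rw [← ht]
      calc (show W →ₗ[ℂ] V from (c • f).hom.hom.hom) (t • w₀) = c • (show W →ₗ[ℂ] V from f.hom.hom.hom) (t • w₀) := rfl
      _ = c • t • v₁ := by rw [map_smul]; rfl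
      _ = t • (c • v₁) := smul_comm c t v₁
      _ = (show W →ₗ[ℂ] V from g.hom.hom.hom) (t • w₀) := by rw [map_smul, ← hc]; rfl
    exfalso
    -- v₁, v₂ are linearly independent
    have hind : LinearIndependent ℂ ![v₁, v₂] := by
      rw [LinearIndependent.pair_iff]
      intro s t hst
      by_cases htz : t = 0
      · subst htz
        rw [zero_smul, add_zero] at hst
        exact ⟨(smul_eq_zero.mp hst).resolve_right hv₁, rfl⟩
      · exfalso
        apply hdep
        refine ⟨-(t⁻¹ * s), ?_⟩
        have h1 : t • v₂ = -(s • v₁) := eq_neg_of_add_eq_zero_right hst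
        calc v₂ = t⁻¹ • (t • v₂) := (inv_smul_smul₀ htz v₂).symm
        _ = t⁻¹ • -(s • v₁) := by rw [h1]
        _ = -(t⁻¹ * s) • v₁ := by rw [smul_neg, smul_smul, neg_smul]
    have hsetr : Set.range ![v₁, v₂] = ({v₁, v₂} : Set V) := by
      simp only [Matrix.range_cons, Matrix.range_empty, Set.union_empty, Set.union_singleton]
      exact Set.pair_comm v₂ v₁
    have hspan : Submodule.span ℂ ({v₁, v₂} : Set V) = ⊤ := by
      apply Submodule.eq_top_of_finrank_eq
      rw [← hsetr]
      have h2 : finrank ℂ (Submodule.span ℂ (Set.range ![v₁, v₂])) = 2 := by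
        have := finrank_span_eq_card (R := ℂ) hind
        simpa using this
      exact h2.trans hd2'.symm
    -- the subgroup element ξ = xa i acts by a scalar c
    set ξ : H := ⟨xa i, hi⟩ with hξ
    obtain ⟨c, hc⟩ := hw₀span (W.ρ ξ w₀)
    have h1 : V.ρ (xa i) v₁ = c • v₁ := by
      calc V.ρ (xa i) v₁ = (show W →ₗ[ℂ] V from f.hom.hom.hom) (W.ρ ξ w₀) := (hom_comm_apply' f ξ w₀).symm
      _ = (show W →ₗ[ℂ] V from f.hom.hom.hom) (c • w₀) := by rw [hc]
      _ = c • v₁ := by rw [map_smul]; rfl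
    have h2 : V.ρ (xa i) v₂ = c • v₂ := by
      calc V.ρ (xa i) v₂ = (show W →ₗ[ℂ] V from g.hom.hom.hom) (W.ρ ξ w₀) := (hom_comm_apply' g ξ w₀).symm
      _ = (show W →ₗ[ℂ] V from g.hom.hom.hom) (c • w₀) := by rw [hc]
      _ = c • v₂ := by rw [map_smul]; rfl
    have hxi : ∀ x : V, V.ρ (xa i) x = c • x := by
      intro x
      have hx : x ∈ Submodule.span ℂ ({v₁, v₂} : Set V) := hspan ▸ Submodule.mem_top
      induction hx using Submodule.span_induction with
      | mem y hy => rcases hy with rfl | rfl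
                    · exact h1
                    · exact h2
      | zero => rw [map_zero, smul_zero]
      | add y z _ _ hy hz => rw [map_add, hy, hz, smul_add]
      | smul t y _ hy => rw [map_smul, hy, smul_comm]
    -- now derive that everything acts by scalars
    set T : Module.End ℂ V := V.ρ (a 1) with hT
    have hcommA : ∀ (j : ZMod (2 * n)) (x : V), T (V.ρ (a j) x) = V.ρ (a j) (T x) := by
      intro j x
      rw [hT, ← Module.End.mul_apply, ← map_mul,
        show (a 1 : QuaternionGroup n) * a j = a j * a 1 by rw [a_mul_a, a_mul_a, add_comm],
        map_mul, Module.End.mul_apply]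
    have hxak : ∀ (j : ZMod (2 * n)) (x : V), V.ρ (xa j) x = c • V.ρ (a (j - i)) x := by
      intro j x
      rw [show (xa j : QuaternionGroup n) = xa i * a (j - i) by rw [xa_mul_a]; congr 1; ring,
        map_mul, Module.End.mul_apply, hxi]
    have hcomm : ∀ (q : QuaternionGroup n) (x : V), T (V.ρ q x) = V.ρ q (T x) := by
      intro q x
      rcases q with j | j
      · exact hcommA j x
      · rw [hxak j x, map_smul, hcommA, ← hxak j (T x)]
    obtain ⟨lam, hlam⟩ := Module.End.exists_eigenvalue T
    have hEinv : ∀ (q : QuaternionGroup n), ∀ x ∈ T.eigenspace lam, V.ρ q x ∈ T.eigenspace lam := by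
      intro q x hx
      rw [Module.End.mem_eigenspace_iff] at hx ⊢
      rw [hcomm, hx, map_smul]
    have hEtop : T.eigenspace lam = ⊤ := by
      rcases invariant_bot_or_top V (T.eigenspace lam) hEinv with h | h
      · exact absurd h hlam
      · exact h
    have hTscal : ∀ x : V, T x = lam • x := fun x =>
      Module.End.mem_eigenspace_iff.mp (hEtop ▸ Submodule.mem_top)
    have hTpow : ∀ (m : ℕ) (x : V), (T ^ m) x = lam ^ m • x := by
      intro m
      induction m with
      | zero => intro x; simp
      | succ m ih =>
        intro x
        rw [pow_succ, Module.End.mul_apply, hTscal, map_smul, ih, smul_smul, pow_succ]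
        ring_nf
    have hscal : ∀ (q : QuaternionGroup n), ∃ μ : ℂ, ∀ x : V, V.ρ q x = μ • x := by
      intro q
      rcases q with j | j
      · refine ⟨lam ^ j.val, fun x => ?_⟩
        rw [show (a j : QuaternionGroup n) = (a 1) ^ j.val by
            rw [a_one_pow, ZMod.natCast_rightInverse j],
          map_pow]
        exact hTpow j.val x
      · refine ⟨c * lam ^ (j - i).val, fun x => ?_⟩
        rw [hxak j x,
          show (V.ρ (a (j - i))) x = lam ^ (j - i).val • x by
            rw [show (a (j - i) : QuaternionGroup n) = (a 1) ^ (j - i).val by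
                rw [a_one_pow, ZMod.natCast_rightInverse],
              map_pow]
            exact hTpow _ x,
          smul_smul]
    have hPinv : ∀ (q : QuaternionGroup n), ∀ x ∈ Submodule.span ℂ {v₁},
        V.ρ q x ∈ Submodule.span ℂ {v₁} := by
      intro q x hx
      rw [Submodule.mem_span_singleton] at hx ⊢
      obtain ⟨t, rfl⟩ := hx
      obtain ⟨μ, hμ⟩ := hscal q
      exact ⟨μ * t, by rw [hμ, smul_smul]⟩
    rcases invariant_bot_or_top V (Submodule.span ℂ {v₁}) hPinv with h | h
    · have hm : v₁ ∈ Submodule.span ℂ ({v₁} : Set V) := Submodule.mem_span_singleton_self v₁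
      rw [h] at hm
      exact hv₁ (by simpa using hm)
    · have h1' : finrank ℂ (Submodule.span ℂ ({v₁} : Set V)) = 1 := finrank_span_singleton hv₁
      rw [h, finrank_top] at h1'
      omega
end
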